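/- Let Ψ = ⟨z₁⟩ * ⟨z₂⟩ * ⟨z₃⟩ be the free product of three cyclic groups of order 2 with generators z₁, z₂, z₃, and let F ⊆ Ψ be the subgroup generated by x = z₁z₂ and y = z₂z₃, which is free on x and y. Then there exist automorphisms α̇, β̇ of Ψ with α̇(z₁) = (z₁z₂)⁻¹ z₁ (z₁z₂), α̇(z₂) = (z₁z₂)⁻¹ z₂ (z₁z₂), α̇(z₃) = (z₁z₂)⁻² z₃ (z₁z₂)², and β̇(z₁) = z₁, β̇(z₂) = (z₂z₃)⁻¹ z₂ (z₂z₃), β̇(z₃) = (z₂z₃)⁻¹ z₃ (z₂z₃); moreover F is invariant under α̇ and β̇, and α̇ restricted to F equals α while β̇ restricted to F equals β, where α, β ∈ Aut F are defined by α(x) = x, α(y) = yx² and β(x) = xy², β(y) = y. -/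

import Mathlib

set_option linter.unusedVariables false

namespace CSP

/-- The free product `Ψ = ⟨z₁⟩ * ⟨z₂⟩ * ⟨z₃⟩` of three cyclic groups of order two. -/
abbrev Psi : Type := Monoid.CoprodI (fun _ : Fin 3 => Multiplicative (ZMod 2))

/-- The generator `zᵢ` of the `i`-th free factor of `Ψ`. -/
def z (i : Fin 3) : Psi :=
  Monoid.CoprodI.of (i := i) (Multiplicative.ofAdd (1 : ZMod 2))

/-- The subgroup `F` of `Ψ` generated by `x = z₁z₂` and `y = z₂z₃`; it is free on
these two generators. -/
def Fsub : Subgroup Psi := Subgroup.closure {z 0 * z 1, z 1 * z 2}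

/-- Lemma 4.1: there are automorphisms `α̇`, `β̇` of `Ψ = ⟨z₁⟩ * ⟨z₂⟩ * ⟨z₃⟩`
given by
`α̇(z₁) = (z₁z₂)⁻¹z₁(z₁z₂)`, `α̇(z₂) = (z₁z₂)⁻¹z₂(z₁z₂)`, `α̇(z₃) = (z₁z₂)⁻²z₃(z₁z₂)²`,
`β̇(z₁) = z₁`, `β̇(z₂) = (z₂z₃)⁻¹z₂(z₂z₃)`, `β̇(z₃) = (z₂z₃)⁻¹z₃(z₂z₃)`.
Moreover the free subgroup `F` on `x = z₁z₂`, `y = z₂z₃` is invariant under `α̇`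
and `β̇`, and the restrictions of `α̇` and `β̇` to `F` are the automorphisms `α`,
`β` of `F` determined by `α(x) = x`, `α(y) = yx²`, `β(x) = xy²`, `β(y) = y`. -/
def zhom {G : Type*} [Group G] (g : G) (hg : g * g = 1) : Multiplicative (ZMod 2) →* G :=
  AddMonoidHom.toMultiplicativeLeft
    (ZMod.lift 2 ⟨(zmultiplesHom (Additive G)) (Additive.ofMul g), by
      simp [zmultiplesHom]
      rw [show (2:ℤ) = 1 + 1 by norm_num, add_zsmul, one_zsmul]
      exact Additive.toMul.injective (by simpa using hg)⟩)

lemma zhom_apply {G : Type*} [Group G] (g : G) (hg : g * g = 1) :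
    zhom g hg (Multiplicative.ofAdd 1) = g := by
  have key : ∀ (f : {f : ℤ →+ Additive G // f 2 = 0}), (ZMod.lift 2 f) (1 : ZMod 2) = f.1 1 := by
    intro f
    rw [show (1 : ZMod 2) = ((1:ℤ) : ZMod 2) by norm_num]
    exact ZMod.lift_coe 2 f 1
  simp only [zhom, AddMonoidHom.toMultiplicativeLeft, Equiv.coe_fn_mk, MonoidHom.coe_mk,
    OneHom.coe_mk]
  show Additive.toMul (ZMod.lift 2 ⟨_, _⟩ (Multiplicative.toAdd (Multiplicative.ofAdd (1 : ZMod 2)))) = g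
  rw [show (Multiplicative.toAdd (Multiplicative.ofAdd (1 : ZMod 2))) = (1 : ZMod 2) from rfl, key]
  simp

lemma mzhom_ext {G : Type*} [Monoid G] {f g : Multiplicative (ZMod 2) →* G}
    (h : f (Multiplicative.ofAdd 1) = g (Multiplicative.ofAdd 1)) : f = g := by
  refine MonoidHom.ext fun x => ?_
  have hx : x = 1 ∨ x = Multiplicative.ofAdd 1 := by revert x; decide
  rcases hx with h1 | h1 <;> simp [h1, h]

lemma zsq (i : Fin 3) : z i * z i = 1 := by
  rw [z, ← MonoidHom.map_mul]
  rw [show (Multiplicative.ofAdd (1 : ZMod 2)) * (Multiplicative.ofAdd (1 : ZMod 2)) = 1 by decide]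
  exact map_one _

lemma conj_sq {G : Type*} [Group G] (a g : G) (h : g * g = 1) :
    (a⁻¹ * g * a) * (a⁻¹ * g * a) = 1 := by
  rw [show (a⁻¹ * g * a) * (a⁻¹ * g * a) = a⁻¹ * (g * g) * a by group, h]; group

lemma conj_sq' {G : Type*} [Group G] (a g : G) (h : g * g = 1) :
    (a * g * a⁻¹) * (a * g * a⁻¹) = 1 := by
  rw [show (a * g * a⁻¹) * (a * g * a⁻¹) = a * (g * g) * a⁻¹ by group, h]; group

def cA : Fin 3 → Psi
  | 0 => (z 0 * z 1)⁻¹ * z 0 * (z 0 * z 1)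
  | 1 => (z 0 * z 1)⁻¹ * z 1 * (z 0 * z 1)
  | 2 => ((z 0 * z 1) ^ 2)⁻¹ * z 2 * (z 0 * z 1) ^ 2

def cA' : Fin 3 → Psi
  | 0 => (z 0 * z 1) * z 0 * (z 0 * z 1)⁻¹
  | 1 => (z 0 * z 1) * z 1 * (z 0 * z 1)⁻¹
  | 2 => (z 0 * z 1) ^ 2 * z 2 * ((z 0 * z 1) ^ 2)⁻¹

def cB : Fin 3 → Psi
  | 0 => z 0
  | 1 => (z 1 * z 2)⁻¹ * z 1 * (z 1 * z 2)
  | 2 => (z 1 * z 2)⁻¹ * z 2 * (z 1 * z 2)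

def cB' : Fin 3 → Psi
  | 0 => z 0
  | 1 => (z 1 * z 2) * z 1 * (z 1 * z 2)⁻¹
  | 2 => (z 1 * z 2) * z 2 * (z 1 * z 2)⁻¹

lemma cA_sq (i : Fin 3) : cA i * cA i = 1 := by
  fin_cases i
  · exact conj_sq (z 0 * z 1) (z 0) (zsq 0)
  · exact conj_sq (z 0 * z 1) (z 1) (zsq 1)
  · exact conj_sq ((z 0 * z 1) ^ 2) (z 2) (zsq 2)

lemma cA'_sq (i : Fin 3) : cA' i * cA' i = 1 := by
  fin_cases i
  · exact conj_sq' (z 0 * z 1) (z 0) (zsq 0)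
  · exact conj_sq' (z 0 * z 1) (z 1) (zsq 1)
  · exact conj_sq' ((z 0 * z 1) ^ 2) (z 2) (zsq 2)

lemma cB_sq (i : Fin 3) : cB i * cB i = 1 := by
  fin_cases i
  · exact zsq 0
  · exact conj_sq (z 1 * z 2) (z 1) (zsq 1)
  · exact conj_sq (z 1 * z 2) (z 2) (zsq 2)

lemma cB'_sq (i : Fin 3) : cB' i * cB' i = 1 := by
  fin_cases i
  · exact zsq 0
  · exact conj_sq' (z 1 * z 2) (z 1) (zsq 1)
  · exact conj_sq' (z 1 * z 2) (z 2) (zsq 2)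

def liftOf (c : Fin 3 → Psi) (hc : ∀ i, c i * c i = 1) : Psi →* Psi :=
  Monoid.CoprodI.lift (fun i => zhom (c i) (hc i))

lemma liftOf_z (c : Fin 3 → Psi) (hc : ∀ i, c i * c i = 1) (i : Fin 3) :
    liftOf c hc (z i) = c i := by
  rw [liftOf, z, Monoid.CoprodI.lift_of, zhom_apply]

lemma comp_eq_id (c c' : Fin 3 → Psi) (hc : ∀ i, c i * c i = 1) (hc' : ∀ i, c' i * c' i = 1)
    (h : ∀ i, liftOf c hc (c' i) = z i) :
    (liftOf c hc).comp (liftOf c' hc') = MonoidHom.id Psi := by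
  apply Monoid.CoprodI.ext_hom
  intro i
  apply mzhom_ext
  simp only [MonoidHom.coe_comp, Function.comp_apply, MonoidHom.id_comp]
  show liftOf c hc (liftOf c' hc' (z i)) = z i
  rw [liftOf_z]; exact h i

lemma liftA_A' (i : Fin 3) : liftOf cA cA_sq (cA' i) = z i := by
  fin_cases i <;>
    simp only [cA', map_mul, map_inv, map_pow, liftOf_z, cA] <;> (first | rfl | (group; rfl) | group)

lemma liftA'_A (i : Fin 3) : liftOf cA' cA'_sq (cA i) = z i := by
  fin_cases i <;>
    simp only [cA, map_mul, map_inv, map_pow, liftOf_z, cA'] <;> (first | rfl | (group; rfl) | group)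

lemma liftB_B' (i : Fin 3) : liftOf cB cB_sq (cB' i) = z i := by
  fin_cases i <;>
    simp only [cB', map_mul, map_inv, map_pow, liftOf_z, cB] <;> (first | rfl | (group; rfl) | group)

lemma liftB'_B (i : Fin 3) : liftOf cB' cB'_sq (cB i) = z i := by
  fin_cases i <;>
    simp only [cB, map_mul, map_inv, map_pow, liftOf_z, cB'] <;> (first | rfl | (group; rfl) | group)

def adot : Psi ≃* Psi :=
  MonoidHom.toMulEquiv (liftOf cA cA_sq) (liftOf cA' cA'_sq)
    (comp_eq_id cA' cA cA'_sq cA_sq liftA'_A)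
    (comp_eq_id cA cA' cA_sq cA'_sq liftA_A')

def bdot : Psi ≃* Psi :=
  MonoidHom.toMulEquiv (liftOf cB cB_sq) (liftOf cB' cB'_sq)
    (comp_eq_id cB' cB cB'_sq cB_sq liftB'_B)
    (comp_eq_id cB cB' cB_sq cB'_sq liftB_B')

lemma adot_z (i : Fin 3) : adot (z i) = cA i := liftOf_z cA cA_sq i
lemma bdot_z (i : Fin 3) : bdot (z i) = cB i := liftOf_z cB cB_sq i

lemma zinv (i : Fin 3) : (z i)⁻¹ = z i := inv_eq_of_mul_eq_one_right (zsq i)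

lemma zmul (i : Fin 3) (w : Psi) : z i * (z i * w) = w := by
  rw [← mul_assoc, zsq, one_mul]

lemma adot_x : adot (z 0 * z 1) = z 0 * z 1 := by
  rw [map_mul, adot_z, adot_z]
  show (z 0 * z 1)⁻¹ * z 0 * (z 0 * z 1) * ((z 0 * z 1)⁻¹ * z 1 * (z 0 * z 1)) = z 0 * z 1
  group

lemma adot_y : adot (z 1 * z 2) = (z 1 * z 2) * (z 0 * z 1) ^ 2 := by
  rw [map_mul, adot_z, adot_z]
  show (z 0 * z 1)⁻¹ * z 1 * (z 0 * z 1) * (((z 0 * z 1) ^ 2)⁻¹ * z 2 * (z 0 * z 1) ^ 2)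
      = (z 1 * z 2) * (z 0 * z 1) ^ 2
  simp only [mul_pow, pow_two, mul_inv_rev, zinv, mul_assoc, zmul]

lemma bdot_x : bdot (z 0 * z 1) = (z 0 * z 1) * (z 1 * z 2) ^ 2 := by
  rw [map_mul, bdot_z, bdot_z]
  show z 0 * ((z 1 * z 2)⁻¹ * z 1 * (z 1 * z 2)) = (z 0 * z 1) * (z 1 * z 2) ^ 2
  simp only [mul_pow, pow_two, mul_inv_rev, zinv, mul_assoc, zmul]

lemma bdot_y : bdot (z 1 * z 2) = z 1 * z 2 := by
  rw [map_mul, bdot_z, bdot_z]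
  show (z 1 * z 2)⁻¹ * z 1 * (z 1 * z 2) * ((z 1 * z 2)⁻¹ * z 2 * (z 1 * z 2)) = z 1 * z 2
  group

lemma closure_pair_eq (x y : Psi) :
    Subgroup.closure {x, y * x ^ 2} = Subgroup.closure {x, y} := by
  apply le_antisymm <;> rw [Subgroup.closure_le] <;> intro g hg <;>
    simp only [Set.mem_insert_iff, Set.mem_singleton_iff] at hg <;>
    rcases hg with h | h <;> rw [h]
  · exact Subgroup.subset_closure (by simp)
  · exact mul_mem (Subgroup.subset_closure (by simp))
      (pow_mem (Subgroup.subset_closure (by simp)) 2)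
  · exact Subgroup.subset_closure (by simp)
  · have hx : x ∈ Subgroup.closure {x, y * x ^ 2} := Subgroup.subset_closure (by simp)
    have hyx : y * x ^ 2 ∈ Subgroup.closure {x, y * x ^ 2} := Subgroup.subset_closure (by simp)
    have := mul_mem hyx (inv_mem (pow_mem hx 2))
    simpa [mul_assoc] using this

lemma closure_pair_eq' (x y : Psi) :
    Subgroup.closure {x * y ^ 2, y} = Subgroup.closure {x, y} := by
  apply le_antisymm <;> rw [Subgroup.closure_le] <;> intro g hg <;>
    simp only [Set.mem_insert_iff, Set.mem_singleton_iff] at hg <;>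
    rcases hg with h | h <;> rw [h]
  · exact mul_mem (Subgroup.subset_closure (by simp))
      (pow_mem (Subgroup.subset_closure (by simp)) 2)
  · exact Subgroup.subset_closure (by simp)
  · have hy : y ∈ Subgroup.closure {x * y ^ 2, y} := Subgroup.subset_closure (by simp)
    have hxy : x * y ^ 2 ∈ Subgroup.closure {x * y ^ 2, y} := Subgroup.subset_closure (by simp)
    have := mul_mem hxy (inv_mem (pow_mem hy 2))
    simpa [mul_assoc] using this
  · exact Subgroup.subset_closure (by simp)

theorem exists_adot_bdot :
    ∃ adot bdot : Psi ≃* Psi,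
      adot (z 0) = (z 0 * z 1)⁻¹ * z 0 * (z 0 * z 1) ∧
      adot (z 1) = (z 0 * z 1)⁻¹ * z 1 * (z 0 * z 1) ∧
      adot (z 2) = ((z 0 * z 1) ^ 2)⁻¹ * z 2 * (z 0 * z 1) ^ 2 ∧
      bdot (z 0) = z 0 ∧
      bdot (z 1) = (z 1 * z 2)⁻¹ * z 1 * (z 1 * z 2) ∧
      bdot (z 2) = (z 1 * z 2)⁻¹ * z 2 * (z 1 * z 2) ∧
      Subgroup.map adot.toMonoidHom Fsub = Fsub ∧
      Subgroup.map bdot.toMonoidHom Fsub = Fsub ∧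
      adot (z 0 * z 1) = z 0 * z 1 ∧
      adot (z 1 * z 2) = (z 1 * z 2) * (z 0 * z 1) ^ 2 ∧
      bdot (z 0 * z 1) = (z 0 * z 1) * (z 1 * z 2) ^ 2 ∧
      bdot (z 1 * z 2) = z 1 * z 2 := by
  refine ⟨adot, bdot, adot_z 0, adot_z 1, adot_z 2, bdot_z 0, bdot_z 1, bdot_z 2, ?_, ?_,
    adot_x, adot_y, bdot_x, bdot_y⟩
  · rw [Fsub, MonoidHom.map_closure]
    rw [Set.image_pair]
    have h1 : adot.toMonoidHom (z 0 * z 1) = z 0 * z 1 := adot_x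
    have h2 : adot.toMonoidHom (z 1 * z 2) = (z 1 * z 2) * (z 0 * z 1) ^ 2 := adot_y
    rw [h1, h2, closure_pair_eq]
  · rw [Fsub, MonoidHom.map_closure]
    rw [Set.image_pair]
    have h1 : bdot.toMonoidHom (z 0 * z 1) = (z 0 * z 1) * (z 1 * z 2) ^ 2 := bdot_x
    have h2 : bdot.toMonoidHom (z 1 * z 2) = z 1 * z 2 := bdot_y
    rw [h1, h2, closure_pair_eq']


end CSP
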